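/- For a 2×2 complex matrix A with eigenvalues λ₁, λ₂ and real scalars a, b ∈ ℝ, the ratio E_A : |D_A| = |λ₁ - conj(λ₂)|² : |λ₁ - λ₂|² is invariant under the transformations A ↦ aA (a ≠ 0), A ↦ A + bI, and A ↦ A⁻¹ (when A is invertible). -/

import Mathlib

open Matrix

noncomputable def DA (A : Matrix (Fin 2) (Fin 2) ℂ) : ℂ :=
  A.det - (Matrix.trace A) ^ 2 / 4

noncomputable def EA (A : Matrix (Fin 2) (Fin 2) ℂ) : ℝ :=
  ((Matrix.trace A).im / 2) ^ 2 + (‖DA A‖ - (DA A).re) / 2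

lemma DA_eq (B : Matrix (Fin 2) (Fin 2) ℂ) (μ₁ μ₂ : ℂ)
    (h1 : μ₁ + μ₂ = Matrix.trace B) (h2 : μ₁ * μ₂ = B.det) :
    DA B = -((μ₁ - μ₂)^2) / 4 := by
  rw [DA, ← h1, ← h2]; ring

lemma abs_DA (B : Matrix (Fin 2) (Fin 2) ℂ) (μ₁ μ₂ : ℂ)
    (h1 : μ₁ + μ₂ = Matrix.trace B) (h2 : μ₁ * μ₂ = B.det) :
    ‖DA B‖ = (‖μ₁ - μ₂‖)^2 / 4 := by
  rw [DA_eq B μ₁ μ₂ h1 h2, norm_div, norm_neg, norm_pow]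
  norm_num

lemma EA_eq (B : Matrix (Fin 2) (Fin 2) ℂ) (μ₁ μ₂ : ℂ)
    (h1 : μ₁ + μ₂ = Matrix.trace B) (h2 : μ₁ * μ₂ = B.det) :
    EA B = (‖μ₁ - starRingEnd ℂ μ₂‖)^2 / 4 := by
  rw [EA, abs_DA B μ₁ μ₂ h1 h2, DA_eq B μ₁ μ₂ h1 h2, ← h1, Complex.sq_norm,
    Complex.sq_norm]
  simp [Complex.normSq_apply, Complex.ext_iff, Complex.mul_re, Complex.mul_im, pow_two]
  ring

/-- The ratio `E_A : |D_A| = |λ₁ - conj λ₂|² : |λ₁ - λ₂|²` is invariant under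
`A ↦ aA` (`a` real, `a ≠ 0`), `A ↦ A + bI` (`b` real), and `A ↦ A⁻¹`
(when `A` is invertible).  Ratio equalities are expressed by cross-multiplication. -/
theorem EA_DA_ratio_real_moebius_invariance (A : Matrix (Fin 2) (Fin 2) ℂ)
    (lam₁ lam₂ : ℂ) (hsum : lam₁ + lam₂ = Matrix.trace A) (hprod : lam₁ * lam₂ = A.det)
    (a b : ℝ) (ha : a ≠ 0) (hA : IsUnit A.det) :
    (EA A * (‖lam₁ - lam₂‖) ^ 2
        = ‖DA A‖ * (‖lam₁ - starRingEnd ℂ lam₂‖) ^ 2) ∧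
    (EA ((a : ℂ) • A) * ‖DA A‖ = EA A * ‖DA ((a : ℂ) • A)‖) ∧
    (EA (A + (b : ℂ) • (1 : Matrix (Fin 2) (Fin 2) ℂ)) * ‖DA A‖
        = EA A * ‖DA (A + (b : ℂ) • (1 : Matrix (Fin 2) (Fin 2) ℂ))‖) ∧
    (EA A⁻¹ * ‖DA A‖ = EA A * ‖DA A⁻¹‖) := by
  have hdet : A.det ≠ 0 := hA.ne_zero
  have hl : lam₁ * lam₂ ≠ 0 := hprod ▸ hdet
  have hl1 : lam₁ ≠ 0 := left_ne_zero_of_mul hl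
  have hl2 : lam₂ ≠ 0 := right_ne_zero_of_mul hl
  refine ⟨?_, ?_, ?_, ?_⟩
  · rw [EA_eq A lam₁ lam₂ hsum hprod, abs_DA A lam₁ lam₂ hsum hprod]; ring
  · -- scaling
    have h1 : (a : ℂ) * lam₁ + (a : ℂ) * lam₂ = Matrix.trace ((a : ℂ) • A) := by
      rw [Matrix.trace_smul, ← hsum, smul_eq_mul]; ring
    have h2 : ((a : ℂ) * lam₁) * ((a : ℂ) * lam₂) = ((a : ℂ) • A).det := by
      rw [Matrix.det_smul, ← hprod]; simp [Fintype.card_fin]; ring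
    rw [EA_eq _ _ _ h1 h2, abs_DA _ _ _ h1 h2, EA_eq A lam₁ lam₂ hsum hprod,
      abs_DA A lam₁ lam₂ hsum hprod]
    have e1 : (a : ℂ) * lam₁ - starRingEnd ℂ ((a : ℂ) * lam₂)
        = (a : ℂ) * (lam₁ - starRingEnd ℂ lam₂) := by
      simp [_root_.map_mul, Complex.conj_ofReal, mul_sub]
    have e2 : (a : ℂ) * lam₁ - (a : ℂ) * lam₂ = (a : ℂ) * (lam₁ - lam₂) := by ring
    rw [e1, e2, norm_mul, norm_mul]; ring
  · -- translation
    have h1 : (lam₁ + b) + (lam₂ + b)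
        = Matrix.trace (A + (b : ℂ) • (1 : Matrix (Fin 2) (Fin 2) ℂ)) := by
      rw [Matrix.trace_add, Matrix.trace_smul, Matrix.trace_one, ← hsum]
      simp [Fintype.card_fin, smul_eq_mul]; ring
    have h2 : (lam₁ + b) * (lam₂ + b)
        = (A + (b : ℂ) • (1 : Matrix (Fin 2) (Fin 2) ℂ)).det := by
      rw [Matrix.det_fin_two]
      rw [Matrix.det_fin_two] at hprod
      rw [Matrix.trace_fin_two] at hsum
      simp only [Matrix.add_apply, Matrix.smul_apply, Matrix.one_apply_eq,
        Matrix.one_apply_ne (by decide : (0 : Fin 2) ≠ 1),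
        Matrix.one_apply_ne (by decide : (1 : Fin 2) ≠ 0), smul_eq_mul, mul_zero, mul_one,
        add_zero]
      linear_combination hprod + (b : ℂ) * hsum
    rw [EA_eq _ _ _ h1 h2, abs_DA _ _ _ h1 h2, EA_eq A lam₁ lam₂ hsum hprod,
      abs_DA A lam₁ lam₂ hsum hprod]
    have e1 : (lam₁ + b) - starRingEnd ℂ (lam₂ + b) = lam₁ - starRingEnd ℂ lam₂ := by
      simp [map_add, Complex.conj_ofReal]
    have e2 : (lam₁ + b) - (lam₂ + b) = lam₁ - lam₂ := by ring
    rw [e1, e2]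
  · -- inverse
    have htr : Matrix.trace A⁻¹ = Matrix.trace A / A.det := by
      rw [Matrix.inv_def, Matrix.trace_smul, Matrix.adjugate_fin_two,
        Ring.inverse_eq_inv']
      rw [Matrix.trace_fin_two]
      simp [Matrix.trace_fin_two, smul_eq_mul, div_eq_mul_inv]
      ring
    have h1 : lam₁⁻¹ + lam₂⁻¹ = Matrix.trace A⁻¹ := by
      rw [htr, ← hsum, ← hprod]; field_simp; ring
    have h2 : lam₁⁻¹ * lam₂⁻¹ = A⁻¹.det := by
      rw [Matrix.det_nonsing_inv, Ring.inverse_eq_inv', ← hprod, mul_inv]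
    rw [EA_eq _ _ _ h1 h2, abs_DA _ _ _ h1 h2, EA_eq A lam₁ lam₂ hsum hprod,
      abs_DA A lam₁ lam₂ hsum hprod]
    have hc2 : starRingEnd ℂ lam₂ ≠ 0 := by simpa using hl2
    have e1 : lam₁⁻¹ - starRingEnd ℂ (lam₂⁻¹)
        = -(lam₁ - starRingEnd ℂ lam₂) / (lam₁ * starRingEnd ℂ lam₂) := by
      rw [map_inv₀]; field_simp; ring
    have e2 : lam₁⁻¹ - lam₂⁻¹ = -(lam₁ - lam₂) / (lam₁ * lam₂) := by field_simp; ring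
    rw [e1, e2, norm_div, norm_div, norm_neg, norm_neg, norm_mul, norm_mul,
      Complex.norm_conj]
    have ha1 : ‖lam₁‖ ≠ 0 := by simpa using hl1
    have ha2 : ‖lam₂‖ ≠ 0 := by simpa using hl2
    field_simp
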